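/- Let q ≥ 2 and n ≥ 1 be integers, let R be a ring, and let f_1, ..., f_s : Z/(q^n−1)Z → R be q-symmetric functions such that for all choices a_k ∈ supp(f_k), 1 ≤ k ≤ s, one has ε_i(a_1) + ... + ε_i(a_s) ≤ q−1 for every 0 ≤ i ≤ n−1. Then the convolution f_1 ⊗ ... ⊗ f_s is q-symmetric. -/

import Mathlib

open scoped Classical

noncomputable section

/-- `ε_i(a)`: the digit of `q^i` in the `q`-adic expansion of `a`. -/
def digit (q i a : ℕ) : ℕ := a / q ^ i % q

/-- `φ_ρ((a_0,…,a_{n-1})_q) = (a_{ρ(0)},…,a_{ρ(n-1)})_q`, permuting the `q`-adic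
digits of the canonical representative. -/
def permDigits (q n : ℕ) (ρ : Equiv.Perm (Fin n)) (a : ZMod (q ^ n - 1)) :
    ZMod (q ^ n - 1) :=
  ((∑ i : Fin n, digit q (ρ i) a.val * q ^ (i : ℕ) : ℕ) : ZMod (q ^ n - 1))

/-- A function on `Z/(q^n-1)Z` is `q`-symmetric if it is invariant under all
permutations of the `q`-adic digits. -/
def QSymmetric {R : Type*} (q n : ℕ) (f : ZMod (q ^ n - 1) → R) : Prop :=
  ∀ (ρ : Equiv.Perm (Fin n)) (a : ZMod (q ^ n - 1)), f (permDigits q n ρ a) = f a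

/-- Convolution of functions on `Z/NZ`: `(f ⊗ g)(i) = ∑_{j+k=i} f(j) g(k)`. -/
def conv {N : ℕ} [NeZero N] {R : Type*} [NonUnitalNonAssocSemiring R]
    (f g : ZMod N → R) : ZMod N → R :=
  fun i => ∑ j : ZMod N, f j * g (i - j)

/-- The convolution `f_1 ⊗ ⋯ ⊗ f_s` of a list of functions (the empty
convolution being the Kronecker delta `δ_0`). -/
def convList {N : ℕ} [NeZero N] {R : Type*} [Semiring R] :
    List (ZMod N → R) → ZMod N → R
  | [] => fun i => if i = 0 then 1 else 0
  | f :: fs => conv f (convList fs)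

/-! ### Auxiliary lemmas on digits of natural numbers -/

lemma digit_lt {q : ℕ} (hq : 2 ≤ q) (i a : ℕ) : digit q i a < q :=
  Nat.mod_lt _ (by omega)

lemma geom_sum_q {q : ℕ} (hq : 1 ≤ q) (n : ℕ) :
    ∑ i ∈ Finset.range n, (q - 1) * q ^ i = q ^ n - 1 := by
  obtain ⟨t, rfl⟩ : ∃ t, q = t + 1 := ⟨q - 1, by omega⟩
  induction n with
  | zero => simp
  | succ n ih =>
      rw [Finset.sum_range_succ, ih]
      simp only [Nat.add_sub_cancel]
      have h1 : 1 ≤ (t + 1) ^ n := Nat.one_le_pow _ _ (by omega)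
      have h2 : (t + 1) ^ (n + 1) = (t + 1) ^ n + t * (t + 1) ^ n := by ring
      have key : ∀ a b c : ℕ, 1 ≤ a → c = a + b → a - 1 + b = c - 1 := by
        intros; omega
      exact key _ _ _ h1 h2

lemma sum_le_of_digit_le {q n : ℕ} (hq : 2 ≤ q) (c : ℕ → ℕ)
    (h : ∀ i < n, c i ≤ q - 1) :
    ∑ i ∈ Finset.range n, c i * q ^ i ≤ q ^ n - 1 := by
  calc ∑ i ∈ Finset.range n, c i * q ^ i
      ≤ ∑ i ∈ Finset.range n, (q - 1) * q ^ i :=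
        Finset.sum_le_sum fun i hi =>
          Nat.mul_le_mul_right _ (h i (Finset.mem_range.mp hi))
    _ = q ^ n - 1 := geom_sum_q (by omega) n

lemma sum_lt_of_digit_lt {q n : ℕ} (hq : 2 ≤ q) (c : ℕ → ℕ)
    (h : ∀ i < n, c i ≤ q - 1) (j : ℕ) (hj : j < n) (hcj : c j < q - 1) :
    ∑ i ∈ Finset.range n, c i * q ^ i < q ^ n - 1 := by
  calc ∑ i ∈ Finset.range n, c i * q ^ i
      < ∑ i ∈ Finset.range n, (q - 1) * q ^ i :=
        Finset.sum_lt_sum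
          (fun i hi => Nat.mul_le_mul_right _ (h i (Finset.mem_range.mp hi)))
          ⟨j, Finset.mem_range.mpr hj,
            Nat.mul_lt_mul_of_lt_of_le hcj le_rfl (Nat.pow_pos (by omega))⟩
    _ = q ^ n - 1 := geom_sum_q (by omega) n

lemma sum_digit_mul_pow (q m : ℕ) :
    ∀ n : ℕ, ∑ i ∈ Finset.range n, digit q i m * q ^ i = m % q ^ n := by
  intro n
  induction n with
  | zero => simp [Nat.mod_one]
  | succ n ih =>
      rw [Finset.sum_range_succ, ih, Nat.mod_pow_succ]
      unfold digit
      ring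

lemma sum_digit_of_lt {q n m : ℕ} (h : m < q ^ n) :
    ∑ i ∈ Finset.range n, digit q i m * q ^ i = m := by
  rw [sum_digit_mul_pow, Nat.mod_eq_of_lt h]

/-- Extraction of digits from a carry-free expansion. -/
lemma digit_sum_eq {q : ℕ} (hq : 2 ≤ q) (n : ℕ) (c : ℕ → ℕ)
    (hc : ∀ i < n, c i < q) (j : ℕ) (hj : j < n) :
    digit q j (∑ i ∈ Finset.range n, c i * q ^ i) = c j := by
  have hA : ∑ i ∈ Finset.range j, c i * q ^ i < q ^ j := by
    have := sum_le_of_digit_le (n := j) hq c (fun i hi => by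
      have := hc i (lt_trans hi hj); omega)
    have h1 : 1 ≤ q ^ j := Nat.one_le_pow _ _ (by omega)
    omega
  set A := ∑ i ∈ Finset.range j, c i * q ^ i with hAdef
  set B := ∑ i ∈ Finset.Ico (j + 1) n, c i * q ^ (i - (j + 1)) with hBdef
  have hsplit : ∑ i ∈ Finset.range n, c i * q ^ i
      = A + q ^ j * (c j + q * B) := by
    rw [Finset.range_eq_Ico, ← Finset.sum_Ico_consecutive _ (Nat.zero_le (j + 1)) hj,
      ← Finset.range_eq_Ico, Finset.sum_range_succ]
    have hT : ∑ i ∈ Finset.Ico (j + 1) n, c i * q ^ i = q ^ (j + 1) * B := by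
      rw [hBdef, Finset.mul_sum]
      refine Finset.sum_congr rfl fun i hi => ?_
      have hij : j + 1 ≤ i := (Finset.mem_Ico.mp hi).1
      rw [← mul_assoc, mul_comm (q ^ (j + 1)) (c i), mul_assoc, ← pow_add]
      congr 2
      omega
    rw [hT]
    have hpow : q ^ (j + 1) = q ^ j * q := pow_succ q j
    rw [hpow]
    ring
  rw [hsplit]
  unfold digit
  rw [Nat.add_mul_div_left _ _ (Nat.pow_pos (by omega)),
    Nat.div_eq_of_lt hA, zero_add, Nat.add_mul_mod_self_left,
    Nat.mod_eq_of_lt (hc j hj)]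

/-! ### Lemmas on `permDigits` -/

section PermDigits

variable {q n : ℕ} [NeZero (q ^ n - 1)]

lemma val_lt_qn (a : ZMod (q ^ n - 1)) : a.val < q ^ n - 1 := ZMod.val_lt a

lemma val_expand (a : ZMod (q ^ n - 1)) :
    ∑ i ∈ Finset.range n, digit q i a.val * q ^ i = a.val :=
  sum_digit_of_lt (by have := val_lt_qn a; omega)

/-- The auxiliary coefficient function for a permuted element. -/
def cfun {q n : ℕ} (ρ : Equiv.Perm (Fin n)) (m : ℕ) (i : ℕ) : ℕ :=
  if h : i < n then digit q (ρ ⟨i, h⟩) m else 0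

lemma finsum_eq_cfun (ρ : Equiv.Perm (Fin n)) (m : ℕ) :
    ∑ i : Fin n, digit q (ρ i) m * q ^ (i : ℕ)
      = ∑ i ∈ Finset.range n, cfun (q := q) ρ m i * q ^ i := by
  rw [← Fin.sum_univ_eq_sum_range (fun i => cfun (q := q) ρ m i * q ^ i) n]
  refine Finset.sum_congr rfl fun i _ => ?_
  have hi : cfun (q := q) ρ m (i : ℕ) = digit q (ρ i) m := by
    unfold cfun
    rw [dif_pos i.isLt]
  rw [hi]

lemma cfun_le (hq : 2 ≤ q) (ρ : Equiv.Perm (Fin n)) (m : ℕ) :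
    ∀ i < n, cfun (q := q) ρ m i ≤ q - 1 := by
  intro i hi
  unfold cfun
  rw [dif_pos hi]
  have := digit_lt hq (ρ ⟨i, hi⟩ : Fin n) m
  omega

lemma exists_digit_lt (hq : 2 ≤ q) (a : ZMod (q ^ n - 1)) :
    ∃ j < n, digit q j a.val < q - 1 := by
  by_contra h
  push_neg at h
  have hge : q ^ n - 1 ≤ a.val := by
    calc q ^ n - 1 = ∑ i ∈ Finset.range n, (q - 1) * q ^ i :=
          (geom_sum_q (by omega) n).symm
      _ ≤ ∑ i ∈ Finset.range n, digit q i a.val * q ^ i :=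
          Finset.sum_le_sum fun i hi =>
            Nat.mul_le_mul_right _ (h i (Finset.mem_range.mp hi))
      _ = a.val := val_expand a
  have := val_lt_qn a
  omega

lemma cfun_exists_lt (hq : 2 ≤ q) (ρ : Equiv.Perm (Fin n)) (a : ZMod (q ^ n - 1)) :
    ∃ j < n, cfun (q := q) ρ a.val j < q - 1 := by
  obtain ⟨j, hj, hjlt⟩ := exists_digit_lt hq a
  refine ⟨(ρ.symm ⟨j, hj⟩ : Fin n), (ρ.symm ⟨j, hj⟩).isLt, ?_⟩
  unfold cfun
  rw [dif_pos (ρ.symm ⟨j, hj⟩).isLt]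
  have heq : ρ ⟨(ρ.symm ⟨j, hj⟩ : Fin n), (ρ.symm ⟨j, hj⟩).isLt⟩ = ⟨j, hj⟩ := by
    simp
  rw [heq]
  exact hjlt

lemma permDigits_val (hq : 2 ≤ q) (ρ : Equiv.Perm (Fin n)) (a : ZMod (q ^ n - 1)) :
    (permDigits q n ρ a).val
      = ∑ i ∈ Finset.range n, cfun (q := q) ρ a.val i * q ^ i := by
  unfold permDigits
  rw [finsum_eq_cfun]
  apply ZMod.val_cast_of_lt
  obtain ⟨j, hj, hjlt⟩ := cfun_exists_lt hq ρ a
  exact sum_lt_of_digit_lt hq _ (cfun_le hq ρ a.val) j hj hjlt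

lemma digit_permDigits (hq : 2 ≤ q) (ρ : Equiv.Perm (Fin n))
    (a : ZMod (q ^ n - 1)) (j : Fin n) :
    digit q j (permDigits q n ρ a).val = digit q (ρ j) a.val := by
  rw [permDigits_val hq ρ a,
    digit_sum_eq hq n _ (fun i hi => by
      have := cfun_le (n := n) hq ρ a.val i hi; omega) j j.isLt]
  unfold cfun
  rw [dif_pos j.isLt]

lemma permDigits_one (hq : 2 ≤ q) (a : ZMod (q ^ n - 1)) :
    permDigits q n 1 a = a := by
  unfold permDigits
  simp only [Equiv.Perm.coe_one, id_eq]
  rw [Fin.sum_univ_eq_sum_range (fun i => digit q i a.val * q ^ i) n, val_expand,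
    ZMod.natCast_val, ZMod.cast_id]

lemma permDigits_comp (hq : 2 ≤ q) (ρ ρ' : Equiv.Perm (Fin n))
    (a : ZMod (q ^ n - 1)) :
    permDigits q n ρ' (permDigits q n ρ a) = permDigits q n (ρ * ρ') a := by
  show ((∑ i : Fin n, digit q (ρ' i) (permDigits q n ρ a).val * q ^ (i : ℕ) : ℕ)
      : ZMod (q ^ n - 1))
    = ((∑ i : Fin n, digit q ((ρ * ρ') i) a.val * q ^ (i : ℕ) : ℕ)
      : ZMod (q ^ n - 1))
  congr 1
  refine Finset.sum_congr rfl fun i _ => ?_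
  rw [digit_permDigits hq ρ a (ρ' i)]
  rfl

/-- `permDigits` as an equivalence. -/
def permDigitsEquiv (hq : 2 ≤ q) (ρ : Equiv.Perm (Fin n)) :
    ZMod (q ^ n - 1) ≃ ZMod (q ^ n - 1) where
  toFun := permDigits q n ρ
  invFun := permDigits q n ρ⁻¹
  left_inv a := by rw [permDigits_comp hq, mul_inv_cancel, permDigits_one hq]
  right_inv a := by rw [permDigits_comp hq, inv_mul_cancel, permDigits_one hq]

lemma permDigits_injective (hq : 2 ≤ q) (ρ : Equiv.Perm (Fin n)) :
    Function.Injective (permDigits q n ρ) :=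
  (permDigitsEquiv hq ρ).injective

/-- Key additivity: on tuples with carry-free digit sums, `permDigits` is additive. -/
lemma permDigits_sum (hq : 2 ≤ q) (ρ : Equiv.Perm (Fin n)) {s : ℕ}
    (a : Fin s → ZMod (q ^ n - 1))
    (h : ∀ i < n, (∑ k : Fin s, digit q i (a k).val) ≤ q - 1) :
    permDigits q n ρ (∑ k, a k) = ∑ k, permDigits q n ρ (a k) := by
  set c : ℕ → ℕ := fun i => ∑ k : Fin s, digit q i (a k).val with hc
  set M : ℕ := ∑ i ∈ Finset.range n, c i * q ^ i with hM
  have hcle : ∀ i < n, c i ≤ q - 1 := by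
    intro i hi
    simp only [hc]
    exact h i hi
  have hcq : ∀ i < n, c i < q := fun i hi => by have := hcle i hi; omega
  have hval : ∑ k : Fin s, (a k).val = M := by
    rw [hM]
    calc ∑ k : Fin s, (a k).val
        = ∑ k : Fin s, ∑ i ∈ Finset.range n, digit q i (a k).val * q ^ i :=
          Finset.sum_congr rfl fun k _ => (val_expand (a k)).symm
      _ = ∑ i ∈ Finset.range n, ∑ k : Fin s, digit q i (a k).val * q ^ i :=
          Finset.sum_comm
      _ = ∑ i ∈ Finset.range n, c i * q ^ i := by
          refine Finset.sum_congr rfl fun i _ => ?_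
          rw [hc]
          rw [Finset.sum_mul]
  have hcast : (∑ k, a k : ZMod (q ^ n - 1)) = (M : ZMod (q ^ n - 1)) := by
    rw [← hval, Nat.cast_sum]
    exact Finset.sum_congr rfl fun k _ => by rw [ZMod.natCast_val, ZMod.cast_id]
  have hMle : M ≤ q ^ n - 1 := by rw [hM]; exact sum_le_of_digit_le hq c hcle
  have hRHS : ∑ k, permDigits q n ρ (a k)
      = ((∑ i : Fin n, c (ρ i) * q ^ (i : ℕ) : ℕ) : ZMod (q ^ n - 1)) := by
    unfold permDigits
    rw [← Nat.cast_sum]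
    congr 1
    rw [Finset.sum_comm]
    refine Finset.sum_congr rfl fun i _ => ?_
    rw [hc]
    rw [Finset.sum_mul]
  rcases lt_or_eq_of_le hMle with hlt | heq
  · have hvalM : ((M : ZMod (q ^ n - 1))).val = M := ZMod.val_cast_of_lt hlt
    rw [hcast, hRHS]
    unfold permDigits
    congr 1
    refine Finset.sum_congr rfl fun i _ => ?_
    congr 1
    rw [hvalM, hM]
    exact digit_sum_eq hq n c hcq _ (ρ i).isLt
  · have hall : ∀ i < n, c i = q - 1 := by
      intro i hi
      by_contra hne
      have hlt' : c i < q - 1 := by have := hcle i hi; omega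
      have := sum_lt_of_digit_lt hq c hcle i hi hlt'
      omega
    have hz : (∑ k, a k : ZMod (q ^ n - 1)) = 0 := by
      rw [hcast, heq, ZMod.natCast_self]
    rw [hRHS, hz]
    have h0 : permDigits q n ρ 0 = 0 := by
      unfold permDigits
      simp [digit]
    rw [h0]
    have hsum : (∑ i : Fin n, c (ρ i) * q ^ (i : ℕ)) = q ^ n - 1 := by
      have hterm : ∀ i : Fin n, c (ρ i) * q ^ (i : ℕ) = (q - 1) * q ^ (i : ℕ) :=
        fun i => by rw [hall _ (ρ i).isLt]
      rw [Finset.sum_congr rfl fun i _ => hterm i,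
        Fin.sum_univ_eq_sum_range (fun i => (q - 1) * q ^ i) n,
        geom_sum_q (by omega) n]
    rw [hsum, ZMod.natCast_self]

end PermDigits

/-! ### Convolution as a sum over tuples -/

lemma convList_ofFn_eq {N : ℕ} [NeZero N] {R : Type*} [Semiring R] :
    ∀ (s : ℕ) (f : Fin s → ZMod N → R) (b : ZMod N),
      convList (List.ofFn f) b
        = ∑ a : Fin s → ZMod N,
            if (∑ k, a k) = b then (List.ofFn fun k => f k (a k)).prod else 0 := by
  intro s
  induction s with
  | zero =>
      intro f b
      rw [List.ofFn_zero]
      show (if b = 0 then 1 else 0) = _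
      simp [eq_comm]
  | succ s ih =>
      intro f b
      rw [List.ofFn_succ]
      show conv (f 0) (convList (List.ofFn fun i : Fin s => f i.succ)) b = _
      unfold conv
      simp only [ih]
      rw [← Equiv.sum_comp (Fin.consEquiv fun _ : Fin (s + 1) => ZMod N)
        (fun a : Fin (s + 1) → ZMod N =>
          if (∑ k, a k) = b then (List.ofFn fun k => f k (a k)).prod else 0),
        Fintype.sum_prod_type]
      refine Finset.sum_congr rfl fun x _ => ?_
      rw [Finset.mul_sum]
      refine Finset.sum_congr rfl fun y _ => ?_
      simp only [Fin.consEquiv_apply, Fin.sum_univ_succ, Fin.cons_zero, Fin.cons_succ,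
        List.ofFn_succ, List.prod_cons, mul_ite, mul_zero]
      exact if_congr eq_sub_iff_add_eq' rfl rfl

/-! ### Main theorem -/

theorem convList_qSymmetric
    (q n s : ℕ) (hq : 2 ≤ q) (hn : 1 ≤ n) [NeZero (q ^ n - 1)]
    (R : Type) [Ring R] (f : Fin s → ZMod (q ^ n - 1) → R)
    (hsym : ∀ k : Fin s, QSymmetric q n (f k))
    (hsupp : ∀ a : Fin s → ZMod (q ^ n - 1), (∀ k, f k (a k) ≠ 0) →
      ∀ i < n, (∑ k : Fin s, digit q i (a k).val) ≤ q - 1) :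
    QSymmetric q n (convList (List.ofFn f)) := by
  intro ρ b
  rw [convList_ofFn_eq, convList_ofFn_eq]
  rw [← Equiv.sum_comp (Equiv.piCongrRight fun _ : Fin s => permDigitsEquiv hq ρ)
    (fun a : Fin s → ZMod (q ^ n - 1) =>
      if (∑ k, a k) = permDigits q n ρ b
      then (List.ofFn fun k => f k (a k)).prod else 0)]
  refine Finset.sum_congr rfl fun a _ => ?_
  show (if (∑ k, permDigits q n ρ (a k)) = permDigits q n ρ b
      then (List.ofFn fun k => f k (permDigits q n ρ (a k))).prod else 0)
    = if (∑ k, a k) = b then (List.ofFn fun k => f k (a k)).prod else 0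
  have hfun : (fun k => f k (permDigits q n ρ (a k))) = fun k => f k (a k) :=
    funext fun k => hsym k ρ (a k)
  have hprod : (List.ofFn fun k => f k (permDigits q n ρ (a k))).prod
      = (List.ofFn fun k => f k (a k)).prod := by rw [hfun]
  by_cases hz : ∀ k, f k (a k) ≠ 0
  · have hsum := permDigits_sum hq ρ a (hsupp a hz)
    have hiff : (∑ k, permDigits q n ρ (a k)) = permDigits q n ρ b
        ↔ (∑ k, a k) = b := by
      rw [← hsum]
      exact (permDigits_injective hq ρ).eq_iff
    exact if_congr hiff hprod rfl
  · push_neg at hz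
    obtain ⟨k, hk⟩ := hz
    have h1 : (List.ofFn fun k => f k (a k)).prod = 0 :=
      List.prod_eq_zero (List.mem_ofFn.mpr ⟨k, hk⟩)
    have h2 : (List.ofFn fun k => f k (permDigits q n ρ (a k))).prod = 0 := by
      rw [hprod]; exact h1
    simp [h1, h2]
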